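/- Let S : A → B be a bounded linear Jordan *-homomorphism between C*-algebras, i.e. S(a ∘ b) = S(a) ∘ S(b) and S(a*) = S(a)* for all a, b ∈ A, where a ∘ b = (ab + ba)/2. Then S is a *-homomorphism (i.e. S is multiplicative) if and only if S is 2-orthogonality preserving. -/

import Mathlib

open Filter Topology

private lemma cstar_approx_bound {W : Type*} [CStarAlgebra W] [PartialOrder W] [StarOrderedRing W]
    (H x : W) (hH : 0 ≤ H) (hx : x * star x ≤ H) (ν : ℝ) (hν : 0 < ν) :
    ‖cfc (fun t : ℝ => min (ν * t ^ 2) 1) H * x - x‖ ≤ Real.sqrt (Real.sqrt ν⁻¹) := by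
  have hfc : Continuous (fun t : ℝ => min (ν * t ^ 2) 1) :=
    (continuous_const.mul (continuous_pow 2)).min continuous_const
  have hgc : Continuous (fun t : ℝ => min (ν * t ^ 2) 1 - 1) := hfc.sub continuous_const
  have e1 : cfc (fun t : ℝ => min (ν * t ^ 2) 1 - 1) H
      = cfc (fun t : ℝ => min (ν * t ^ 2) 1) H - 1 := by
    rw [cfc_sub _ _ H hfc.continuousOn continuousOn_const, cfc_const_one ℝ H]
  set c : W := cfc (fun t : ℝ => min (ν * t ^ 2) 1 - 1) H with hcdef
  have hcsa : IsSelfAdjoint c := cfc_predicate _ H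
  have key1 : cfc (fun t : ℝ => min (ν * t ^ 2) 1) H * x - x = c * x := by
    rw [e1, sub_mul, one_mul]
  have key2 : (c * x) * star (c * x) = c * (x * star x) * c := by
    rw [star_mul, hcsa.star_eq]; noncomm_ring
  have hP0 : (0 : W) ≤ c * (x * star x) * c :=
    hcsa.conjugate_nonneg (mul_star_self_nonneg x)
  have hPQ : c * (x * star x) * c ≤ c * H * c := hcsa.conjugate_le_conjugate hx
  have e2 : cfc (fun t : ℝ => (min (ν * t ^ 2) 1 - 1) * (t * (min (ν * t ^ 2) 1 - 1))) H
      = c * (H * c) := by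
    rw [cfc_mul (fun t : ℝ => min (ν * t ^ 2) 1 - 1) (fun t : ℝ => t * (min (ν * t ^ 2) 1 - 1)) H
        hgc.continuousOn ((continuous_id'.mul hgc).continuousOn),
      cfc_mul (fun t : ℝ => t) _ H continuous_id'.continuousOn hgc.continuousOn, cfc_id' ℝ H]
  have hQnorm : ‖c * H * c‖ ≤ Real.sqrt ν⁻¹ := by
    rw [mul_assoc, ← e2]
    refine norm_cfc_le (Real.sqrt_nonneg _) fun t ht => ?_
    have ht0 : 0 ≤ t := spectrum_nonneg_of_nonneg hH ht
    by_cases hlt : ν * t ^ 2 < 1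
    · have hmin : min (ν * t ^ 2) 1 = ν * t ^ 2 := min_eq_left hlt.le
      rw [hmin]
      have hinv : ν * ν⁻¹ = 1 := mul_inv_cancel₀ hν.ne'
      have ht2 : t ^ 2 ≤ ν⁻¹ := by nlinarith [sq_nonneg t]
      have htle : t ≤ Real.sqrt ν⁻¹ := by
        rw [show t = Real.sqrt (t ^ 2) from (Real.sqrt_sq ht0).symm]
        exact Real.sqrt_le_sqrt ht2
      have habs : |ν * t ^ 2 - 1| ≤ 1 := by
        rw [abs_le]; constructor <;> nlinarith [sq_nonneg t]
      rw [Real.norm_eq_abs, abs_mul, abs_mul, abs_of_nonneg ht0]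
      have h2 : |ν * t ^ 2 - 1| * |ν * t ^ 2 - 1| ≤ 1 :=
        mul_le_one₀ habs (abs_nonneg _) habs
      calc |ν * t ^ 2 - 1| * (t * |ν * t ^ 2 - 1|)
          = t * (|ν * t ^ 2 - 1| * |ν * t ^ 2 - 1|) := by ring
        _ ≤ t * 1 := mul_le_mul_of_nonneg_left h2 ht0
        _ = t := mul_one t
        _ ≤ Real.sqrt ν⁻¹ := htle
    · rw [min_eq_right (not_lt.mp hlt)]
      simp only [sub_self, zero_mul, mul_zero, norm_zero]
      exact Real.sqrt_nonneg _
  have h1 : ‖cfc (fun t : ℝ => min (ν * t ^ 2) 1) H * x - x‖ *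
      ‖cfc (fun t : ℝ => min (ν * t ^ 2) 1) H * x - x‖ ≤ Real.sqrt ν⁻¹ := by
    rw [key1, ← CStarRing.norm_self_mul_star, key2]
    exact (CStarAlgebra.norm_le_norm_of_nonneg_of_le hP0 hPQ).trans hQnorm
  rw [Real.le_sqrt (norm_nonneg _)]
  · rw [sq]; exact h1
  · exact Real.sqrt_nonneg _

private lemma cstar_approx {W : Type*} [CStarAlgebra W] [PartialOrder W] [StarOrderedRing W]
    (H x : W) (hH : 0 ≤ H) (hx : x * star x ≤ H) :
    Tendsto (fun n : ℕ => cfc (fun t : ℝ => min (((n : ℝ) + 1) * t ^ 2) 1) H * x)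
      atTop (𝓝 x) := by
  rw [tendsto_iff_norm_sub_tendsto_zero]
  refine squeeze_zero (fun n => norm_nonneg _)
    (fun n => cstar_approx_bound H x hH hx ((n : ℝ) + 1) (by positivity)) ?_
  have l1 : Tendsto (fun n : ℕ => (((n : ℝ) + 1))⁻¹) atTop (𝓝 0) := by
    simpa [one_div] using (tendsto_one_div_add_atTop_nhds_zero_nat :
      Tendsto (fun n : ℕ => 1 / ((n : ℝ) + 1)) atTop (𝓝 0))
  have hs : Tendsto Real.sqrt (𝓝 0) (𝓝 0) :=
    Real.continuous_sqrt.tendsto' 0 0 (by simp)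
  exact hs.comp (hs.comp l1)

private lemma nonunital_approx {A : Type*} [NonUnitalCStarAlgebra A] (a b : A) :
    ∃ e : ℕ → A,
      Tendsto (fun n => e n * a) atTop (𝓝 a) ∧
      Tendsto (fun n => b * e n) atTop (𝓝 b) ∧
      Tendsto (fun n => e n * (a * b)) atTop (𝓝 (a * b)) ∧
      Tendsto (fun n => (a * b) * e n) atTop (𝓝 (a * b)) := by
  letI : PartialOrder (Unitization ℂ A) := CStarAlgebra.spectralOrder _
  letI : StarOrderedRing (Unitization ℂ A) := CStarAlgebra.spectralOrderedRing _
  set h : A := a * star a + star b * b + (a * b) * star (a * b) + star (a * b) * (a * b) with hh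
  set e : ℕ → A := fun n => cfcₙ (fun t : ℝ => min (((n : ℝ) + 1) * t ^ 2) 1) h with he
  have hsa : ∀ n, IsSelfAdjoint (e n) := fun n => cfcₙ_predicate _ h
  have hecast : ∀ n, ((e n : Unitization ℂ A)) =
      cfc (fun t : ℝ => min (((n : ℝ) + 1) * t ^ 2) 1) (h : Unitization ℂ A) := fun n =>
    Unitization.real_cfcₙ_eq_cfc_inr h _ (by simp)
  have hHeq : (h : Unitization ℂ A) =
      (a : Unitization ℂ A) * star (a : Unitization ℂ A) +
      star (b : Unitization ℂ A) * (b : Unitization ℂ A) +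
      ((a * b : A) : Unitization ℂ A) * star ((a * b : A) : Unitization ℂ A) +
      star ((a * b : A) : Unitization ℂ A) * ((a * b : A) : Unitization ℂ A) := by
    simp only [hh, Unitization.inr_add, Unitization.inr_mul, Unitization.inr_star]
  have h1 : (0 : Unitization ℂ A) ≤ (a : Unitization ℂ A) * star (a : Unitization ℂ A) :=
    mul_star_self_nonneg _
  have h2 : (0 : Unitization ℂ A) ≤ star (b : Unitization ℂ A) * (b : Unitization ℂ A) :=
    star_mul_self_nonneg _
  have h3 : (0 : Unitization ℂ A) ≤
      ((a * b : A) : Unitization ℂ A) * star ((a * b : A) : Unitization ℂ A) :=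
    mul_star_self_nonneg _
  have h4 : (0 : Unitization ℂ A) ≤
      star ((a * b : A) : Unitization ℂ A) * ((a * b : A) : Unitization ℂ A) :=
    star_mul_self_nonneg _
  have hH : (0 : Unitization ℂ A) ≤ (h : Unitization ℂ A) := by
    rw [hHeq]
    exact add_nonneg (add_nonneg (add_nonneg h1 h2) h3) h4
  have left : ∀ x : A,
      (x : Unitization ℂ A) * star (x : Unitization ℂ A) ≤ (h : Unitization ℂ A) →
      Tendsto (fun n => e n * x) atTop (𝓝 x) := by
    intro x hx
    have := cstar_approx (h : Unitization ℂ A) (x : Unitization ℂ A) hH hx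
    rw [tendsto_iff_norm_sub_tendsto_zero] at this ⊢
    refine this.congr fun n => ?_
    rw [← hecast n, ← Unitization.inr_mul, ← Unitization.inr_sub, Unitization.norm_inr]
  have la : Tendsto (fun n => e n * a) atTop (𝓝 a) := by
    refine left a ?_
    rw [← sub_nonneg, hHeq, show (a : Unitization ℂ A) * star (a : Unitization ℂ A) +
      star (b : Unitization ℂ A) * (b : Unitization ℂ A) +
      ((a * b : A) : Unitization ℂ A) * star ((a * b : A) : Unitization ℂ A) +
      star ((a * b : A) : Unitization ℂ A) * ((a * b : A) : Unitization ℂ A) -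
      (a : Unitization ℂ A) * star (a : Unitization ℂ A) =
      star (b : Unitization ℂ A) * (b : Unitization ℂ A) +
      ((a * b : A) : Unitization ℂ A) * star ((a * b : A) : Unitization ℂ A) +
      star ((a * b : A) : Unitization ℂ A) * ((a * b : A) : Unitization ℂ A) from by abel]
    exact add_nonneg (add_nonneg h2 h3) h4
  have lab : Tendsto (fun n => e n * (a * b)) atTop (𝓝 (a * b)) := by
    refine left (a * b) ?_
    rw [← sub_nonneg, hHeq, show (a : Unitization ℂ A) * star (a : Unitization ℂ A) +
      star (b : Unitization ℂ A) * (b : Unitization ℂ A) +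
      ((a * b : A) : Unitization ℂ A) * star ((a * b : A) : Unitization ℂ A) +
      star ((a * b : A) : Unitization ℂ A) * ((a * b : A) : Unitization ℂ A) -
      ((a * b : A) : Unitization ℂ A) * star ((a * b : A) : Unitization ℂ A) =
      (a : Unitization ℂ A) * star (a : Unitization ℂ A) +
      star (b : Unitization ℂ A) * (b : Unitization ℂ A) +
      star ((a * b : A) : Unitization ℂ A) * ((a * b : A) : Unitization ℂ A) from by abel]
    exact add_nonneg (add_nonneg h1 h2) h4
  have right : ∀ x : A,
      Tendsto (fun n => e n * star x) atTop (𝓝 (star x)) →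
      Tendsto (fun n => x * e n) atTop (𝓝 x) := by
    intro x hx
    have := (continuous_star.tendsto (star x)).comp hx
    simp only [Function.comp_def, star_mul, star_star, (hsa _).star_eq] at this
    exact this
  have lb : Tendsto (fun n => b * e n) atTop (𝓝 b) := by
    refine right b (left (star b) ?_)
    rw [← sub_nonneg, hHeq]
    rw [show ((star b : A) : Unitization ℂ A) * star ((star b : A) : Unitization ℂ A) =
        star (b : Unitization ℂ A) * (b : Unitization ℂ A) from by
      simp only [Unitization.inr_star, star_star]]
    rw [show (a : Unitization ℂ A) * star (a : Unitization ℂ A) +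
      star (b : Unitization ℂ A) * (b : Unitization ℂ A) +
      ((a * b : A) : Unitization ℂ A) * star ((a * b : A) : Unitization ℂ A) +
      star ((a * b : A) : Unitization ℂ A) * ((a * b : A) : Unitization ℂ A) -
      star (b : Unitization ℂ A) * (b : Unitization ℂ A) =
      (a : Unitization ℂ A) * star (a : Unitization ℂ A) +
      ((a * b : A) : Unitization ℂ A) * star ((a * b : A) : Unitization ℂ A) +
      star ((a * b : A) : Unitization ℂ A) * ((a * b : A) : Unitization ℂ A) from by abel]
    exact add_nonneg (add_nonneg h1 h3) h4
  have lab2 : Tendsto (fun n => (a * b) * e n) atTop (𝓝 (a * b)) := by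
    refine right (a * b) (left (star (a * b)) ?_)
    rw [← sub_nonneg, hHeq]
    rw [show ((star (a * b) : A) : Unitization ℂ A) * star ((star (a * b) : A) : Unitization ℂ A) =
        star ((a * b : A) : Unitization ℂ A) * ((a * b : A) : Unitization ℂ A) from by
      simp only [Unitization.inr_star, star_star]]
    rw [show (a : Unitization ℂ A) * star (a : Unitization ℂ A) +
      star (b : Unitization ℂ A) * (b : Unitization ℂ A) +
      ((a * b : A) : Unitization ℂ A) * star ((a * b : A) : Unitization ℂ A) +
      star ((a * b : A) : Unitization ℂ A) * ((a * b : A) : Unitization ℂ A) -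
      star ((a * b : A) : Unitization ℂ A) * ((a * b : A) : Unitization ℂ A) =
      (a : Unitization ℂ A) * star (a : Unitization ℂ A) +
      star (b : Unitization ℂ A) * (b : Unitization ℂ A) +
      ((a * b : A) : Unitization ℂ A) * star ((a * b : A) : Unitization ℂ A) from by abel]
    exact add_nonneg (add_nonneg h1 h2) h3
  exact ⟨e, la, lb, lab, lab2⟩

section KeyExtraction

variable {A B : Type*} [NonUnitalCStarAlgebra A] [NonUnitalCStarAlgebra B]

private lemma hkey_row (S : A →L[ℂ] B)
    (horth : ∀ x y : Matrix (Fin 2) (Fin 2) A,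
      x * star y = 0 ∧ star y * x = 0 →
        x.map ⇑S * star (y.map ⇑S) = 0 ∧ star (y.map ⇑S) * x.map ⇑S = 0)
    (x1 x2 y1 y2 : A) (h : x1 * star y1 + x2 * star y2 = 0) :
    S x1 * star (S y1) + S x2 * star (S y2) = 0 := by
  have := horth !![x1, x2; 0, 0] !![0, 0; y1, y2] ?_
  · have h2 := congrFun (congrFun this.1 0) 1
    simpa [Matrix.mul_apply, Fin.sum_univ_two, Matrix.star_apply] using h2
  · constructor <;> ext i j <;> fin_cases i <;> fin_cases j <;>
      simp [Matrix.mul_apply, Fin.sum_univ_two, Matrix.star_apply, h]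

private lemma hkey_col (S : A →L[ℂ] B)
    (horth : ∀ x y : Matrix (Fin 2) (Fin 2) A,
      x * star y = 0 ∧ star y * x = 0 →
        x.map ⇑S * star (y.map ⇑S) = 0 ∧ star (y.map ⇑S) * x.map ⇑S = 0)
    (x1 x2 y1 y2 : A) (h : star y1 * x1 + star y2 * x2 = 0) :
    star (S y1) * S x1 + star (S y2) * S x2 = 0 := by
  have := horth !![0, x1; 0, x2] !![y1, 0; y2, 0] ?_
  · have h2 := congrFun (congrFun this.2 0) 1
    simpa [Matrix.mul_apply, Fin.sum_univ_two, Matrix.star_apply] using h2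
  · constructor <;> ext i j <;> fin_cases i <;> fin_cases j <;>
      simp [Matrix.mul_apply, Fin.sum_univ_two, Matrix.star_apply, h]

private lemma hA_lemma (S : A →L[ℂ] B) (hstar : ∀ a : A, S (star a) = star (S a))
    (horth : ∀ x y : Matrix (Fin 2) (Fin 2) A,
      x * star y = 0 ∧ star y * x = 0 →
        x.map ⇑S * star (y.map ⇑S) = 0 ∧ star (y.map ⇑S) * x.map ⇑S = 0)
    (a b d : A) : S (a * b) * S d = S a * S (b * d) := by
  have key := hkey_row S horth (a * b) (-a) (star d) (star d * star b) ?_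
  · rw [← hstar, ← hstar, star_star] at key
    have h1 : star (star d * star b) = b * d := by simp [mul_assoc]
    rw [h1] at key
    rw [← sub_eq_zero]
    simpa [map_neg, neg_mul, ← sub_eq_add_neg] using key
  · simp [mul_assoc]

private lemma hB_lemma (S : A →L[ℂ] B) (hstar : ∀ a : A, S (star a) = star (S a))
    (horth : ∀ x y : Matrix (Fin 2) (Fin 2) A,
      x * star y = 0 ∧ star y * x = 0 →
        x.map ⇑S * star (y.map ⇑S) = 0 ∧ star (y.map ⇑S) * x.map ⇑S = 0)
    (d a b : A) : S d * S (a * b) = S (d * a) * S b := by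
  have key := hkey_col S horth (a * b) (-b) (star d) (star a * star d) ?_
  · rw [← hstar, ← hstar, star_star] at key
    have h1 : star (star a * star d) = d * a := by simp [mul_assoc]
    rw [h1] at key
    rw [← sub_eq_zero]
    simpa [map_neg, neg_mul, ← sub_eq_add_neg] using key
  · simp [mul_assoc]

end KeyExtraction

/-- A bounded linear Jordan `*`-homomorphism `S : A → B` between
C*-algebras is a `*`-homomorphism (i.e. multiplicative) if and only if it is
2-orthogonality preserving, i.e. the amplification `S₂ : M₂(A) → M₂(B)` maps
orthogonal pairs (`x y* = 0` and `y* x = 0`) to orthogonal pairs. -/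
theorem jordanStarHom_multiplicative_iff_two_orthogonality_preserving
    {A B : Type*} [NonUnitalCStarAlgebra A] [NonUnitalCStarAlgebra B]
    (S : A →L[ℂ] B)
    (hjordan : ∀ a b : A,
      S ((2⁻¹ : ℂ) • (a * b + b * a)) = (2⁻¹ : ℂ) • (S a * S b + S b * S a))
    (hstar : ∀ a : A, S (star a) = star (S a)) :
    (∀ a b : A, S (a * b) = S a * S b) ↔
    (∀ x y : Matrix (Fin 2) (Fin 2) A,
      x * star y = 0 ∧ star y * x = 0 →
        x.map ⇑S * star (y.map ⇑S) = 0 ∧ star (y.map ⇑S) * x.map ⇑S = 0) := by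
  constructor
  · -- forward direction: multiplicative implies 2-orthogonality preserving
    intro hmul x y hxy
    obtain ⟨h1, h2⟩ := hxy
    constructor
    · ext i j
      have hij := congrFun (congrFun h1 i) j
      simp only [Matrix.mul_apply, Matrix.star_apply, Matrix.zero_apply] at hij ⊢
      simp only [Matrix.map_apply]
      calc ∑ k, S (x i k) * star (S (y j k))
          = ∑ k, S (x i k * star (y j k)) := by
            exact Finset.sum_congr rfl fun k _ => by rw [← hstar, ← hmul]
        _ = S (∑ k, x i k * star (y j k)) := (map_sum S _ _).symm
        _ = 0 := by rw [hij, map_zero]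
    · ext i j
      have hij := congrFun (congrFun h2 i) j
      simp only [Matrix.mul_apply, Matrix.star_apply, Matrix.zero_apply] at hij ⊢
      simp only [Matrix.map_apply]
      calc ∑ k, star (S (y k i)) * S (x k j)
          = ∑ k, S (star (y k i) * x k j) := by
            exact Finset.sum_congr rfl fun k _ => by rw [← hstar, ← hmul]
        _ = S (∑ k, star (y k i) * x k j) := (map_sum S _ _).symm
        _ = 0 := by rw [hij, map_zero]
  · -- reverse direction
    intro horth a b
    have hJ : ∀ u v : A, S (u * v + v * u) = S u * S v + S v * S u := by
      intro u v
      have h := hjordan u v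
      rw [map_smul] at h
      exact smul_right_injective B (by norm_num : (2⁻¹ : ℂ) ≠ 0) h
    obtain ⟨e, la, lb, lab, lab2⟩ := nonunital_approx a b
    have hAe := hA_lemma S hstar horth
    have hBe := hB_lemma S hstar horth
    have t1 : Tendsto (fun n => S (e n) * S (a * b)) atTop (𝓝 (S a * S b)) := by
      have hrw : ∀ n, S (e n) * S (a * b) = S (e n * a) * S b := fun n => hBe (e n) a b
      have := (((S.continuous.tendsto a).comp la).mul
        (tendsto_const_nhds (x := S b)))
      exact this.congr fun n => (hrw n).symm
    have t2 : Tendsto (fun n => S (a * b) * S (e n)) atTop (𝓝 (S a * S b)) := by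
      have hrw : ∀ n, S (a * b) * S (e n) = S a * S (b * e n) := fun n => hAe a b (e n)
      have := ((tendsto_const_nhds (x := S a)).mul
        ((S.continuous.tendsto b).comp lb))
      exact this.congr fun n => (hrw n).symm
    have t3 : Tendsto (fun n => S (e n) * S (a * b) + S (a * b) * S (e n)) atTop
        (𝓝 (S (a * b) + S (a * b))) := by
      have hlim : Tendsto (fun n => e n * (a * b) + (a * b) * e n) atTop
          (𝓝 ((a * b) + (a * b))) := lab.add lab2
      have := (S.continuous.tendsto _).comp hlim
      rw [map_add] at this
      refine this.congr fun n => ?_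
      exact hJ (e n) (a * b)
    have huniq : S a * S b + S a * S b = S (a * b) + S (a * b) :=
      tendsto_nhds_unique (t1.add t2) t3
    have h2 : (2 : ℂ) • (S a * S b) = (2 : ℂ) • S (a * b) := by
      rw [two_smul, two_smul]
      exact huniq
    exact (smul_right_injective B (by norm_num : (2 : ℂ) ≠ 0) h2).symm
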